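/- Intermediate bound (46) in the proof of Theorem 3.3 (generalization bound with a fixed synthetic dataset). Let P₀ be a probability measure on Z with P₀(Zᵢ) > 0 for every i ∈ {1,…,K}. Fix n ≥ 1 and δ > 0. Then with probability at least 1 − δ over S = (s₁,…,s_n) ~ P₀^⊗n, the following holds simultaneously for every nonempty finite tuple G = (u₁,…,u_g) of points of Z: if every entry of G lies in ⋃_{i ∈ T_S} Zᵢ and gᵢ := |Gᵢ| > 0 for every i ∈ T_S, then F(P₀) ≤ L · Σ_{i ∈ T_S} (nᵢ/n) · R(Sᵢ, Zᵢ | P₀) + C·√((2K·ln 2 − 2·ln δ)/n) + F(S) − Σ_{i ∈ T_S} (gᵢ/g) · F(Sᵢ) + L · Σ_{i ∈ T_S} (gᵢ/g) · d̄(Gᵢ, Sᵢ) + F(G), where nᵢ = |Sᵢ| and Gᵢ is the subtuple of G lying in Zᵢ. -/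

import Mathlib

open MeasureTheory ProbabilityTheory

open Classical in
/-- The set of indices of the entries of the tuple `S` that lie in the region `A`. -/
noncomputable def idxIn {Z : Type*} {m : ℕ} (S : Fin m → Z) (A : Set Z) : Finset (Fin m) :=
  Finset.univ.filter fun j => S j ∈ A

open Classical in
/-- `T_S`: the set of indices `i` of regions `Zpart i` containing at least one entry of `S`. -/
noncomputable def TS {Z : Type*} {K m : ℕ} (Zpart : Fin K → Set Z) (S : Fin m → Z) :
    Finset (Fin K) :=
  Finset.univ.filter fun i => (idxIn S (Zpart i)).Nonempty

/-- Empirical loss of `ℓ` on the subtuple of `S` indexed by `B`. -/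
noncomputable def empLoss {Z : Type*} {m : ℕ} (ℓ : Z → ℝ) (S : Fin m → Z)
    (B : Finset (Fin m)) : ℝ :=
  (B.card : ℝ)⁻¹ * ∑ j ∈ B, ℓ (S j)

/-- Local robustness `R(s, A | P) = E_{z∼P}[‖h z − h s‖ | z ∈ A]`. -/
noncomputable def locRob {Z : Type*} [MeasurableSpace Z] {H : Type*} [NormedAddCommGroup H]
    (h : Z → H) (P : Measure Z) (A : Set Z) (s : Z) : ℝ :=
  ∫ z, ‖h z - h s‖ ∂(P[|A])

/-- Local robustness of the subtuple of `S` indexed by `B`: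
`R(S_B, A | P) = (1/|B|) ∑_{j∈B} R(S j, A | P)`. -/
noncomputable def tupRob {Z : Type*} [MeasurableSpace Z] {H : Type*} [NormedAddCommGroup H]
    (h : Z → H) (P : Measure Z) (A : Set Z) {m : ℕ} (S : Fin m → Z) (B : Finset (Fin m)) : ℝ :=
  (B.card : ℝ)⁻¹ * ∑ j ∈ B, locRob h P A (S j)

/-- `h`-based discrepancy `d̄(G_{BG}, S_{BS})` between the subtuple of `G` indexed by `BG`
and the subtuple of `S` indexed by `BS`. -/
noncomputable def disc {Z : Type*} {H : Type*} [NormedAddCommGroup H] (h : Z → H)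
    {k m : ℕ} (G : Fin k → Z) (BG : Finset (Fin k)) (S : Fin m → Z) (BS : Finset (Fin m)) : ℝ :=
  ((BG.card : ℝ) * (BS.card : ℝ))⁻¹ * ∑ u ∈ BG, ∑ s ∈ BS, ‖h (S s) - h (G u)‖

section Aux

lemma mem_idxIn {Z : Type*} {m : ℕ} {S : Fin m → Z} {A : Set Z} {j : Fin m} :
    j ∈ idxIn S A ↔ S j ∈ A := by
  classical
  simp [idxIn]

lemma aux_sinh_le (y : ℝ) (hy : 0 ≤ y) : Real.sinh y ≤ y * Real.cosh y := by
  have hder : ∀ x : ℝ, HasDerivAt (fun t => t * Real.cosh t - Real.sinh t)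
      (x * Real.sinh x) x := by
    intro x
    have h1 : HasDerivAt (fun t => t * Real.cosh t - Real.sinh t)
        (1 * Real.cosh x + x * Real.sinh x - Real.cosh x) x :=
      ((hasDerivAt_id x).mul (Real.hasDerivAt_cosh x)).sub (Real.hasDerivAt_sinh x)
    exact h1.congr_deriv (by ring)
  have hmono : MonotoneOn (fun t => t * Real.cosh t - Real.sinh t) (Set.Ici 0) := by
    apply monotoneOn_of_deriv_nonneg (convex_Ici 0)
    · exact fun x _ => ((hder x).continuousAt).continuousWithinAt
    · exact fun x _ => ((hder x).differentiableAt).differentiableWithinAt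
    · intro x hx
      rw [interior_Ici] at hx
      rw [(hder x).deriv]
      exact mul_nonneg hx.le (Real.sinh_nonneg_iff.mpr hx.le)
  have h0 := hmono (Set.self_mem_Ici) hy hy
  simp only [Real.cosh_zero, Real.sinh_zero, mul_one, zero_mul, sub_zero, zero_sub, neg_zero] at h0
  linarith

lemma cosh_le_exp_half_sq (x : ℝ) : Real.cosh x ≤ Real.exp (x ^ 2 / 2) := by
  suffices h : ∀ y : ℝ, 0 ≤ y → Real.cosh y ≤ Real.exp (y ^ 2 / 2) by
    calc Real.cosh x = Real.cosh |x| := (Real.cosh_abs x).symm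
    _ ≤ Real.exp (|x| ^ 2 / 2) := h _ (abs_nonneg x)
    _ = Real.exp (x ^ 2 / 2) := by rw [sq_abs]
  intro y hy
  have hder : ∀ x : ℝ, HasDerivAt (fun t => Real.cosh t * Real.exp (-(t ^ 2 / 2)))
      (Real.sinh x * Real.exp (-(x ^ 2 / 2)) + Real.cosh x * (Real.exp (-(x ^ 2 / 2)) * (-x))) x := by
    intro x
    have hinner : HasDerivAt (fun t : ℝ => -(t ^ 2 / 2)) (-x) x := by
      have := ((hasDerivAt_pow 2 x).div_const 2).neg
      exact this.congr_deriv (by ring)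
    exact (Real.hasDerivAt_cosh x).mul (hinner.exp)
  have hanti : AntitoneOn (fun t => Real.cosh t * Real.exp (-(t ^ 2 / 2))) (Set.Ici 0) := by
    apply antitoneOn_of_deriv_nonpos (convex_Ici 0)
    · exact fun x _ => ((hder x).continuousAt).continuousWithinAt
    · exact fun x _ => ((hder x).differentiableAt).differentiableWithinAt
    · intro x hx
      rw [interior_Ici] at hx
      rw [(hder x).deriv]
      have h1 := aux_sinh_le x hx.le
      have h2 := Real.exp_pos (-(x ^ 2 / 2))
      nlinarith
  have h0 := hanti (Set.self_mem_Ici) hy hy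
  simp only [Real.cosh_zero, one_mul, neg_zero] at h0
  rw [show -((0:ℝ) ^ 2 / 2) = 0 by norm_num, Real.exp_zero] at h0
  calc Real.cosh y = Real.cosh y * Real.exp (-(y ^ 2 / 2)) * Real.exp (y ^ 2 / 2) := by
        rw [mul_assoc, ← Real.exp_add]; simp
    _ ≤ 1 * Real.exp (y ^ 2 / 2) :=
        mul_le_mul_of_nonneg_right h0 (Real.exp_pos _).le
    _ = Real.exp (y ^ 2 / 2) := one_mul _

lemma mgf_single {Z : Type*} [MeasurableSpace Z] (P : Measure Z) [IsProbabilityMeasure P]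
    (Y : Z → ℝ) (hY : Measurable Y) (C t : ℝ) (hC : 0 < C) (hbd : ∀ z, |Y z| ≤ C)
    (hmean : ∫ z, Y z ∂P = 0) :
    ∫ z, Real.exp (t * Y z) ∂P ≤ Real.exp (t ^ 2 * C ^ 2 / 2) := by
  set e₁ := Real.exp (-(t * C)) with he₁
  set e₂ := Real.exp (t * C) with he₂
  set d := (e₂ - e₁) / (2 * C) with hd
  have hpt : ∀ z, Real.exp (t * Y z) ≤ (e₁ + e₂) / 2 + Y z * d := by
    intro z
    have hw : |Y z / C| ≤ 1 := by
      rw [abs_div, abs_of_pos hC]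
      exact (div_le_one hC).mpr (hbd z)
    rw [abs_le] at hw
    have ha : 0 ≤ (1 - Y z / C) / 2 := by linarith
    have hb : 0 ≤ (1 + Y z / C) / 2 := by linarith
    have key := convexOn_exp.2 (Set.mem_univ (-(t * C))) (Set.mem_univ (t * C)) ha hb
      (by ring)
    simp only [smul_eq_mul] at key
    have harg : (1 - Y z / C) / 2 * (-(t * C)) + (1 + Y z / C) / 2 * (t * C) = t * Y z := by
      field_simp
      ring
    rw [harg] at key
    calc Real.exp (t * Y z)
        ≤ (1 - Y z / C) / 2 * e₁ + (1 + Y z / C) / 2 * e₂ := key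
      _ = (e₁ + e₂) / 2 + Y z * d := by
          rw [hd]; field_simp; ring
  have hYint : Integrable Y P :=
    (integrable_const C).mono' hY.aestronglyMeasurable
      (ae_of_all _ fun z => by rw [Real.norm_eq_abs]; exact hbd z)
  have hexp_int : Integrable (fun z => Real.exp (t * Y z)) P := by
    refine (integrable_const (Real.exp (|t| * C))).mono'
      ((hY.const_mul t).exp).aestronglyMeasurable (ae_of_all _ fun z => ?_)
    rw [Real.norm_eq_abs, abs_of_pos (Real.exp_pos _)]
    apply Real.exp_le_exp.mpr
    calc t * Y z ≤ |t * Y z| := le_abs_self _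
      _ = |t| * |Y z| := abs_mul _ _
      _ ≤ |t| * C := mul_le_mul_of_nonneg_left (hbd z) (abs_nonneg t)
  have hrhs_int : Integrable (fun z => (e₁ + e₂) / 2 + Y z * d) P :=
    (integrable_const _).add (hYint.mul_const _)
  calc ∫ z, Real.exp (t * Y z) ∂P
      ≤ ∫ z, ((e₁ + e₂) / 2 + Y z * d) ∂P := integral_mono hexp_int hrhs_int hpt
    _ = (e₁ + e₂) / 2 := by
        rw [integral_add (integrable_const _) (hYint.mul_const _), integral_const,
          integral_mul_const, hmean]
        simp [measure_univ]
    _ = Real.cosh (t * C) := by rw [Real.cosh_eq, he₁, he₂]; ring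
    _ ≤ Real.exp ((t * C) ^ 2 / 2) := cosh_le_exp_half_sq _
    _ = Real.exp (t ^ 2 * C ^ 2 / 2) := by ring_nf

lemma chernoff_pi {Z : Type*} [MeasurableSpace Z] (P : Measure Z) [IsProbabilityMeasure P]
    (ℓ : Z → ℝ) (hℓ : Measurable ℓ) (C : ℝ) (hC : 0 < C) (hℓ0 : ∀ z, 0 ≤ ℓ z)
    (hℓC : ∀ z, ℓ z ≤ C) (n : ℕ) (hn : 1 ≤ n) (ε : ℝ) (hε : 0 ≤ ε) :
    (Measure.pi (fun _ : Fin n => P)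
      {S | (n : ℝ) * C * ε ≤ ∑ j, ((∫ z, ℓ z ∂P) - ℓ (S j))}).toReal
      ≤ Real.exp (-((n : ℝ) * ε ^ 2) / 2) := by
  letI : MeasureSpace Z := ⟨P⟩
  haveI : IsProbabilityMeasure (volume : Measure Z) := inferInstanceAs (IsProbabilityMeasure P)
  set m := ∫ z, ℓ z ∂P with hm
  set Y : Z → ℝ := fun z => m - ℓ z with hYdef
  set X : (Fin n → Z) → ℝ := fun S => ∑ j, Y (S j) with hXdef
  set t : ℝ := ε / C with htdef
  have ht : 0 ≤ t := div_nonneg hε hC.le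
  have hint_ℓ : Integrable ℓ P :=
    (integrable_const C).mono' hℓ.aestronglyMeasurable
      (ae_of_all _ fun z => by rw [Real.norm_eq_abs, abs_of_nonneg (hℓ0 z)]; exact hℓC z)
  have hm0 : 0 ≤ m := integral_nonneg hℓ0
  have hmC : m ≤ C := by
    calc m ≤ ∫ _, C ∂P := integral_mono hint_ℓ (integrable_const C) hℓC
      _ = C := by simp [measure_univ]
  have hYbd : ∀ z, |Y z| ≤ C := fun z =>
    abs_le.mpr ⟨by have := hℓC z; simp only [hYdef]; linarith,
      by have := hℓ0 z; simp only [hYdef]; linarith⟩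
  have hYmeas : Measurable Y := measurable_const.sub hℓ
  have hYint : Integrable Y P :=
    (integrable_const C).mono' hYmeas.aestronglyMeasurable
      (ae_of_all _ fun z => by rw [Real.norm_eq_abs]; exact hYbd z)
  have hmean : ∫ z, Y z ∂P = 0 := by
    simp only [hYdef]
    rw [integral_sub (integrable_const m) hint_ℓ]
    simp [measure_univ, hm]
  have hone : ∫ z, Real.exp (t * Y z) ∂P ≤ Real.exp (t ^ 2 * C ^ 2 / 2) :=
    mgf_single P Y hYmeas C t hC hYbd hmean
  have hexp_int : Integrable (fun z => Real.exp (t * Y z)) P := by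
    refine (integrable_const (Real.exp (|t| * C))).mono'
      ((hYmeas.const_mul t).exp).aestronglyMeasurable (ae_of_all _ fun z => ?_)
    rw [Real.norm_eq_abs, abs_of_pos (Real.exp_pos _)]
    apply Real.exp_le_exp.mpr
    calc t * Y z ≤ |t * Y z| := le_abs_self _
      _ = |t| * |Y z| := abs_mul _ _
      _ ≤ |t| * C := mul_le_mul_of_nonneg_left (hYbd z) (abs_nonneg t)
  have hpieq : Measure.pi (fun _ : Fin n => P) = (volume : Measure (Fin n → Z)) :=
    (volume_pi).symm
  have hprod : (fun S : Fin n → Z => Real.exp (t * X S))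
      = fun S => ∏ j, Real.exp (t * Y (S j)) := by
    funext S
    rw [hXdef, Finset.mul_sum, Real.exp_sum]
  have hX_int : Integrable (fun S => Real.exp (t * X S)) (Measure.pi fun _ : Fin n => P) := by
    rw [hpieq, hprod]
    exact Integrable.fintype_prod (f := fun (_ : Fin n) z => Real.exp (t * Y z))
      (fun _ => hexp_int)
  have hchern := measure_ge_le_exp_mul_mgf (μ := Measure.pi fun _ : Fin n => P) (X := X)
    ((n : ℝ) * C * ε) ht hX_int
  have hmgf : mgf X (Measure.pi fun _ : Fin n => P) t
      ≤ Real.exp ((n : ℝ) * (t ^ 2 * C ^ 2 / 2)) := by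
    have : mgf X (Measure.pi fun _ : Fin n => P) t
        = (∫ z, Real.exp (t * Y z) ∂P) ^ n := by
      rw [mgf]
      calc ∫ S, Real.exp (t * X S) ∂(Measure.pi fun _ : Fin n => P)
          = ∫ S : Fin n → Z, ∏ j, Real.exp (t * Y (S j)) := by
            rw [hpieq]; exact congrArg (fun f => ∫ S : Fin n → Z, f S) hprod
        _ = (∫ z, Real.exp (t * Y z)) ^ (Fintype.card (Fin n)) :=
            integral_fintype_prod_eq_pow (ι := Fin n) (fun z => Real.exp (t * Y z))
        _ = (∫ z, Real.exp (t * Y z) ∂P) ^ n := by rw [Fintype.card_fin]; rfl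
    rw [this]
    calc (∫ z, Real.exp (t * Y z) ∂P) ^ n
        ≤ (Real.exp (t ^ 2 * C ^ 2 / 2)) ^ n :=
          pow_le_pow_left₀ (integral_nonneg fun z => (Real.exp_pos _).le) hone n
      _ = Real.exp ((n : ℝ) * (t ^ 2 * C ^ 2 / 2)) := by
          rw [← Real.exp_nat_mul]
  calc (Measure.pi (fun _ : Fin n => P)
      {S | (n : ℝ) * C * ε ≤ ∑ j, (m - ℓ (S j))}).toReal
      ≤ Real.exp (-t * ((n : ℝ) * C * ε)) * mgf X (Measure.pi fun _ : Fin n => P) t := hchern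
    _ ≤ Real.exp (-t * ((n : ℝ) * C * ε)) * Real.exp ((n : ℝ) * (t ^ 2 * C ^ 2 / 2)) :=
        mul_le_mul_of_nonneg_left hmgf (Real.exp_pos _).le
    _ = Real.exp (-((n : ℝ) * ε ^ 2) / 2) := by
        rw [← Real.exp_add]
        congr 1
        rw [htdef]
        field_simp
        ring

end Aux

theorem generalization_bound_fixed_synthetic_dataset {Z : Type*} [MeasurableSpace Z] {H : Type*} [NormedAddCommGroup H]
    [NormedSpace ℝ H] [MeasurableSpace H] [BorelSpace H]
    (K : ℕ) (hK : 1 ≤ K) (Zpart : Fin K → Set Z)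
    (hZmeas : ∀ i, MeasurableSet (Zpart i))
    (hZne : ∀ i, (Zpart i).Nonempty)
    (hZdisj : Pairwise (Function.onFun Disjoint Zpart))
    (hZcover : ⋃ i, Zpart i = Set.univ)
    (h : Z → H) (hh : Measurable h)
    (ℓ : Z → ℝ) (hℓ : Measurable ℓ) (L C : ℝ)
    (hℓ0 : ∀ z, 0 ≤ ℓ z) (hℓC : ∀ z, ℓ z ≤ C)
    (hLip : ∀ s u, |ℓ s - ℓ u| ≤ L * ‖h s - h u‖)
    (P0 : Measure Z) [IsProbabilityMeasure P0] (hP0 : ∀ i, 0 < P0 (Zpart i))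
    (n : ℕ) (hn : 1 ≤ n) (δ : ℝ) (hδ : 0 < δ) :
    1 - ENNReal.ofReal δ ≤
      Measure.pi (fun _ : Fin n => P0)
        {S : Fin n → Z |
          ∀ (g : ℕ) (G : Fin g → Z), 1 ≤ g →
            (∀ j, G j ∈ ⋃ i ∈ TS Zpart S, Zpart i) →
            (∀ i ∈ TS Zpart S, 0 < (idxIn G (Zpart i)).card) →
            ∫ z, ℓ z ∂P0 ≤
              L * ∑ i ∈ TS Zpart S,
                  ((idxIn S (Zpart i)).card : ℝ) / (n : ℝ)
                    * tupRob h P0 (Zpart i) S (idxIn S (Zpart i))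
              + C * Real.sqrt ((2 * K * Real.log 2 - 2 * Real.log δ) / n)
              + empLoss ℓ S Finset.univ
              - ∑ i ∈ TS Zpart S,
                  ((idxIn G (Zpart i)).card : ℝ) / (g : ℝ) * empLoss ℓ S (idxIn S (Zpart i))
              + L * ∑ i ∈ TS Zpart S,
                  ((idxIn G (Zpart i)).card : ℝ) / (g : ℝ)
                    * disc h G (idxIn G (Zpart i)) S (idxIn S (Zpart i))
              + empLoss ℓ G Finset.univ} := by
  set μ := Measure.pi (fun _ : Fin n => P0) with hμ
  haveI : IsProbabilityMeasure μ := by rw [hμ]; infer_instance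
  -- trivial case δ ≥ 1
  by_cases hδ1 : 1 ≤ δ
  · have : (1 : ENNReal) ≤ ENNReal.ofReal δ := by
      rw [← ENNReal.ofReal_one]
      exact ENNReal.ofReal_le_ofReal hδ1
    rw [tsub_eq_zero_of_le this]
    exact zero_le
  push_neg at hδ1
  set ε : ℝ := Real.sqrt ((2 * K * Real.log 2 - 2 * Real.log δ) / n) with hε
  have hε0 : 0 ≤ ε := Real.sqrt_nonneg _
  have hC0 : 0 ≤ C := by
    obtain ⟨z0, _⟩ := hZne ⟨0, hK⟩
    exact (hℓ0 z0).trans (hℓC z0)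
  set m : ℝ := ∫ z, ℓ z ∂P0 with hm
  set good : Set (Fin n → Z) := {S | m ≤ empLoss ℓ S Finset.univ + C * ε} with hgood
  -- the deterministic implication
  have hsub : good ⊆ {S : Fin n → Z |
      ∀ (g : ℕ) (G : Fin g → Z), 1 ≤ g →
        (∀ j, G j ∈ ⋃ i ∈ TS Zpart S, Zpart i) →
        (∀ i ∈ TS Zpart S, 0 < (idxIn G (Zpart i)).card) →
        m ≤
          L * ∑ i ∈ TS Zpart S,
              ((idxIn S (Zpart i)).card : ℝ) / (n : ℝ)
                * tupRob h P0 (Zpart i) S (idxIn S (Zpart i))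
          + C * Real.sqrt ((2 * K * Real.log 2 - 2 * Real.log δ) / n)
          + empLoss ℓ S Finset.univ
          - ∑ i ∈ TS Zpart S,
              ((idxIn G (Zpart i)).card : ℝ) / (g : ℝ) * empLoss ℓ S (idxIn S (Zpart i))
          + L * ∑ i ∈ TS Zpart S,
              ((idxIn G (Zpart i)).card : ℝ) / (g : ℝ)
                * disc h G (idxIn G (Zpart i)) S (idxIn S (Zpart i))
          + empLoss ℓ G Finset.univ} := by
    intro S hS
    intro g G hg hGcov hGpos
    have hgpos : (0 : ℝ) < g := by exact_mod_cast hg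
    -- Step 1: nonnegativity of the robustness term
    have hLA : 0 ≤ L * ∑ i ∈ TS Zpart S,
        ((idxIn S (Zpart i)).card : ℝ) / (n : ℝ)
          * tupRob h P0 (Zpart i) S (idxIn S (Zpart i)) := by
      by_cases hc : ∀ s u : Z, h s = h u
      · have hz : ∀ (A : Set Z) (s : Z), locRob h P0 A s = 0 := by
          intro A s
          rw [locRob]
          have : (fun z => ‖h z - h s‖) = fun _ => (0 : ℝ) := by
            funext z; rw [hc z s, sub_self, norm_zero]
          rw [this, integral_zero]
        have : ∀ i ∈ TS Zpart S,
            ((idxIn S (Zpart i)).card : ℝ) / (n : ℝ)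
              * tupRob h P0 (Zpart i) S (idxIn S (Zpart i)) = 0 := by
          intro i _
          rw [tupRob]
          simp [hz]
        rw [Finset.sum_congr rfl this]
        simp
      · push_neg at hc
        obtain ⟨s, u, hsu⟩ := hc
        have hnorm : 0 < ‖h s - h u‖ := norm_pos_iff.mpr (sub_ne_zero.mpr hsu)
        have hL : 0 ≤ L := by
          have h1 : 0 * ‖h s - h u‖ ≤ L * ‖h s - h u‖ := by
            simpa using (abs_nonneg (ℓ s - ℓ u)).trans (hLip s u)
          exact le_of_mul_le_mul_right h1 hnorm
        apply mul_nonneg hL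
        apply Finset.sum_nonneg
        intro i _
        apply mul_nonneg (div_nonneg (Nat.cast_nonneg _) (Nat.cast_nonneg _))
        rw [tupRob]
        apply mul_nonneg (inv_nonneg.mpr (Nat.cast_nonneg _))
        apply Finset.sum_nonneg
        intro j _
        exact integral_nonneg fun z => norm_nonneg _
    -- Step 2: per-region comparison with G
    have key : ∀ i ∈ TS Zpart S,
        empLoss ℓ S (idxIn S (Zpart i)) ≤
          empLoss ℓ G (idxIn G (Zpart i))
            + L * disc h G (idxIn G (Zpart i)) S (idxIn S (Zpart i)) := by
      intro i hi
      set BS := idxIn S (Zpart i)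
      set BG := idxIn G (Zpart i)
      have haS : 0 < (BS.card : ℝ) := by
        have : BS.Nonempty := (Finset.mem_filter.mp hi).2
        exact_mod_cast Finset.card_pos.mpr this
      have hbG : 0 < (BG.card : ℝ) := by exact_mod_cast hGpos i hi
      have hkey : (BG.card : ℝ) * ∑ s ∈ BS, ℓ (S s)
          ≤ (BS.card : ℝ) * ∑ u ∈ BG, ℓ (G u)
            + L * ∑ u ∈ BG, ∑ s ∈ BS, ‖h (S s) - h (G u)‖ := by
        have h1 : ∑ u ∈ BG, ∑ s ∈ BS, ℓ (S s)
            ≤ ∑ u ∈ BG, ∑ s ∈ BS, (ℓ (G u) + L * ‖h (S s) - h (G u)‖) := by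
          apply Finset.sum_le_sum
          intro u _
          apply Finset.sum_le_sum
          intro s _
          have h2 := hLip (S s) (G u)
          have h3 := le_abs_self (ℓ (S s) - ℓ (G u))
          linarith
        calc (BG.card : ℝ) * ∑ s ∈ BS, ℓ (S s)
            = ∑ u ∈ BG, ∑ s ∈ BS, ℓ (S s) := by
              rw [Finset.sum_const, nsmul_eq_mul]
          _ ≤ ∑ u ∈ BG, ∑ s ∈ BS, (ℓ (G u) + L * ‖h (S s) - h (G u)‖) := h1
          _ = (BS.card : ℝ) * ∑ u ∈ BG, ℓ (G u)
              + L * ∑ u ∈ BG, ∑ s ∈ BS, ‖h (S s) - h (G u)‖ := by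
              simp only [Finset.sum_add_distrib, Finset.sum_const, nsmul_eq_mul,
                ← Finset.mul_sum]
      rw [empLoss, empLoss, disc]
      have e1 : ((BS.card : ℝ))⁻¹ * ∑ s ∈ BS, ℓ (S s)
          = ((BS.card : ℝ) * (BG.card : ℝ))⁻¹ * ((BG.card : ℝ) * ∑ s ∈ BS, ℓ (S s)) := by
        field_simp
      have e2 : ((BG.card : ℝ))⁻¹ * ∑ u ∈ BG, ℓ (G u)
            + L * (((BG.card : ℝ) * (BS.card : ℝ))⁻¹ * ∑ u ∈ BG, ∑ s ∈ BS, ‖h (S s) - h (G u)‖)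
          = ((BS.card : ℝ) * (BG.card : ℝ))⁻¹
            * ((BS.card : ℝ) * ∑ u ∈ BG, ℓ (G u)
              + L * ∑ u ∈ BG, ∑ s ∈ BS, ‖h (S s) - h (G u)‖) := by
        field_simp
      rw [e1, e2]
      exact mul_le_mul_of_nonneg_left hkey (by positivity)
    -- Step 3: sum over regions of G-empirical losses equals global one
    have hdisjBG : (↑(TS Zpart S) : Set (Fin K)).PairwiseDisjoint
        (fun i => idxIn G (Zpart i)) := by
      intro i _ j _ hij
      show Disjoint (idxIn G (Zpart i)) (idxIn G (Zpart j))
      rw [Finset.disjoint_left]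
      intro idx h1 h2
      have m1 : G idx ∈ Zpart i := (mem_idxIn.mp h1)
      have m2 : G idx ∈ Zpart j := (mem_idxIn.mp h2)
      exact Set.disjoint_left.mp (hZdisj hij) m1 m2
    have hcover : (TS Zpart S).biUnion (fun i => idxIn G (Zpart i)) = Finset.univ := by
      apply Finset.eq_univ_iff_forall.mpr
      intro idx
      rw [Finset.mem_biUnion]
      have := hGcov idx
      rw [Set.mem_iUnion₂] at this
      obtain ⟨i, hiT, hmem⟩ := this
      exact ⟨i, hiT, mem_idxIn.mpr hmem⟩
    have hsumG : ∑ i ∈ TS Zpart S,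
        ((idxIn G (Zpart i)).card : ℝ) / (g : ℝ) * empLoss ℓ G (idxIn G (Zpart i))
        = empLoss ℓ G Finset.univ := by
      have step : ∀ i ∈ TS Zpart S,
          ((idxIn G (Zpart i)).card : ℝ) / (g : ℝ) * empLoss ℓ G (idxIn G (Zpart i))
            = (g : ℝ)⁻¹ * ∑ u ∈ idxIn G (Zpart i), ℓ (G u) := by
        intro i hi
        have hbG : ((idxIn G (Zpart i)).card : ℝ) ≠ 0 := by
          have := hGpos i hi
          positivity
        rw [empLoss]
        field_simp
      rw [Finset.sum_congr rfl step, ← Finset.mul_sum,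
        ← Finset.sum_biUnion hdisjBG, hcover, empLoss, Finset.card_univ, Fintype.card_fin]
    -- combine step 2 and 3
    have hB : ∑ i ∈ TS Zpart S,
        ((idxIn G (Zpart i)).card : ℝ) / (g : ℝ) * empLoss ℓ S (idxIn S (Zpart i))
        ≤ empLoss ℓ G Finset.univ
          + L * ∑ i ∈ TS Zpart S,
              ((idxIn G (Zpart i)).card : ℝ) / (g : ℝ)
                * disc h G (idxIn G (Zpart i)) S (idxIn S (Zpart i)) := by
      calc ∑ i ∈ TS Zpart S,
          ((idxIn G (Zpart i)).card : ℝ) / (g : ℝ) * empLoss ℓ S (idxIn S (Zpart i))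
          ≤ ∑ i ∈ TS Zpart S,
            ((idxIn G (Zpart i)).card : ℝ) / (g : ℝ)
              * (empLoss ℓ G (idxIn G (Zpart i))
                + L * disc h G (idxIn G (Zpart i)) S (idxIn S (Zpart i))) := by
            apply Finset.sum_le_sum
            intro i hi
            exact mul_le_mul_of_nonneg_left (key i hi)
              (div_nonneg (Nat.cast_nonneg _) (Nat.cast_nonneg _))
        _ = ∑ i ∈ TS Zpart S,
              ((idxIn G (Zpart i)).card : ℝ) / (g : ℝ) * empLoss ℓ G (idxIn G (Zpart i))
            + L * ∑ i ∈ TS Zpart S,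
              ((idxIn G (Zpart i)).card : ℝ) / (g : ℝ)
                * disc h G (idxIn G (Zpart i)) S (idxIn S (Zpart i)) := by
            rw [Finset.mul_sum, ← Finset.sum_add_distrib]
            apply Finset.sum_congr rfl
            intro i _
            ring
        _ = empLoss ℓ G Finset.univ
            + L * ∑ i ∈ TS Zpart S,
              ((idxIn G (Zpart i)).card : ℝ) / (g : ℝ)
                * disc h G (idxIn G (Zpart i)) S (idxIn S (Zpart i)) := by
            rw [hsumG]
    have hS' : m ≤ empLoss ℓ S Finset.univ + C * ε := hS
    rw [hε] at hS'
    linarith [hLA, hB, hS']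
  -- the probabilistic bound
  have hbad : μ goodᶜ ≤ ENNReal.ofReal δ := by
    by_cases hCz : C = 0
    · have hzero : ∀ z, ℓ z = 0 := fun z => le_antisymm (hCz ▸ hℓC z) (hℓ0 z)
      have hall : ∀ S : Fin n → Z, S ∈ good := by
        intro S
        show m ≤ empLoss ℓ S Finset.univ + C * ε
        have h1 : m = 0 := by
          rw [hm]
          simp [hzero]
        have h2 : empLoss ℓ S Finset.univ = 0 := by
          rw [empLoss]
          simp [hzero]
        rw [h1, h2, hCz]
        simp
      have : goodᶜ = ∅ := by
        ext S
        simp [hall S]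
      rw [this]
      simp
    · have hC : 0 < C := lt_of_le_of_ne hC0 (Ne.symm hCz)
      have hδ' : Real.log δ < 0 := Real.log_neg hδ hδ1
      have hlog2 : 0 ≤ Real.log 2 := Real.log_nonneg one_le_two
      have hnum : 0 ≤ (2 * K * Real.log 2 - 2 * Real.log δ) / n := by
        apply div_nonneg _ (Nat.cast_nonneg n)
        have : 0 ≤ 2 * (K : ℝ) * Real.log 2 := by positivity
        linarith
      have hε2 : ε ^ 2 = (2 * K * Real.log 2 - 2 * Real.log δ) / n := by
        rw [hε, Real.sq_sqrt hnum]
      have hnpos : (0 : ℝ) < n := by exact_mod_cast hn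
      have hexpδ : Real.exp (-((n : ℝ) * ε ^ 2) / 2) ≤ δ := by
        rw [hε2, mul_div_assoc', mul_div_cancel_left₀ _ hnpos.ne']
        calc Real.exp (-(2 * K * Real.log 2 - 2 * Real.log δ) / 2)
            = Real.exp (Real.log δ - K * Real.log 2) := by ring_nf
          _ ≤ Real.exp (Real.log δ) := by
              apply Real.exp_le_exp.mpr
              have : 0 ≤ (K : ℝ) * Real.log 2 := by positivity
              linarith
          _ = δ := Real.exp_log hδ
      have hsubbad : goodᶜ ⊆ {S : Fin n → Z | (n : ℝ) * C * ε ≤ ∑ j, (m - ℓ (S j))} := by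
        intro S hSc
        simp only [hgood, Set.mem_compl_iff, Set.mem_setOf_eq, not_le] at hSc
        show (n : ℝ) * C * ε ≤ ∑ j, (m - ℓ (S j))
        have hsum : ∑ j, (m - ℓ (S j)) = (n : ℝ) * m - ∑ j, ℓ (S j) := by
          rw [Finset.sum_sub_distrib, Finset.sum_const, Finset.card_univ, Fintype.card_fin,
            nsmul_eq_mul]
        have hemp : empLoss ℓ S Finset.univ = (n : ℝ)⁻¹ * ∑ j, ℓ (S j) := by
          rw [empLoss, Finset.card_univ, Fintype.card_fin]
        rw [hemp] at hSc
        rw [hsum]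
        have hinv : (n : ℝ) * (n : ℝ)⁻¹ = 1 := mul_inv_cancel₀ hnpos.ne'
        have hd := mul_lt_mul_of_pos_left hSc hnpos
        rw [mul_add, ← mul_assoc, hinv, one_mul] at hd
        ring_nf at hd ⊢
        linarith
      calc μ goodᶜ ≤ μ {S : Fin n → Z | (n : ℝ) * C * ε ≤ ∑ j, (m - ℓ (S j))} :=
            measure_mono hsubbad
        _ ≤ ENNReal.ofReal δ := by
            have hch := chernoff_pi P0 ℓ hℓ C hC hℓ0 hℓC n hn ε hε0
            rw [← hm] at hch
            have hfin : μ {S : Fin n → Z | (n : ℝ) * C * ε ≤ ∑ j, (m - ℓ (S j))} ≠ ⊤ :=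
              measure_ne_top _ _
            rw [← ENNReal.ofReal_toReal hfin]
            apply ENNReal.ofReal_le_ofReal
            exact le_trans hch hexpδ
  calc (1 : ENNReal) - ENNReal.ofReal δ
      ≤ μ Set.univ - μ goodᶜ := by
        rw [measure_univ]
        exact tsub_le_tsub_left hbad 1
    _ ≤ μ (Set.univ \ goodᶜ) := le_measure_diff
    _ = μ good := by rw [Set.diff_eq, compl_compl, Set.univ_inter]
    _ ≤ _ := measure_mono hsub
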